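/- arXiv:1709.05741 — 2 statements merged into one kernel-verified Lean document; each statement's English description precedes it below -/
import Mathlib

section
/- Let N be a Poisson random variable with mean μ > 0 and let (U_i)_{i∈ℕ} be an i.i.d. sequence of random variables uniformly distributed on [0, 1], with N and (U_i) independent. Fix 0 ≤ b ≤ a ≤ 1 and define N_1 = ∑_{i=0}^{N−1} 1{U_i ≤ a} and N_2 = ∑_{i=0}^{N−1} 1{U_i > b}. Then E[N_1 · N_2] = a(1−b)·μ² + (a−b)·μ. -/
open MeasureTheory ProbabilityTheory Real Finset
open scoped NNReal ENNReal Nat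

lemma aux_exp (x : ℝ) : HasSum (fun n : ℕ => x ^ n / n !) (Real.exp x) := by
  rw [Real.exp_eq_exp_ℝ]; exact NormedSpace.expSeries_div_hasSum_exp x

lemma aux_m1 (x : ℝ) : HasSum (fun n : ℕ => (n : ℝ) * (x ^ n / n !)) (x * Real.exp x) := by
  have h : HasSum (fun n : ℕ => ((n+1 : ℕ) : ℝ) * (x ^ (n+1) / (n+1)!)) (x * Real.exp x) := by
    have := (aux_exp x).mul_left x
    convert this using 2 with n
    on_goal 1 => rfl
    have hfac : ((n+1)! : ℝ) = (n+1) * n ! := by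
      rw [Nat.factorial_succ]; push_cast; ring
    rw [hfac]
    push_cast
    have hn : (n : ℝ) + 1 ≠ 0 := by positivity
    have hf : (n ! : ℝ) ≠ 0 := Nat.cast_ne_zero.mpr n.factorial_ne_zero
    field_simp
    ring
  have h2 := (hasSum_nat_add_iff (f := fun n : ℕ => (n : ℝ) * (x ^ n / n !)) 1).mp h
  simpa using h2

lemma aux_m2 (x : ℝ) : HasSum (fun n : ℕ => (n : ℝ) * ((n : ℝ) - 1) * (x ^ n / n !))
    (x ^ 2 * Real.exp x) := by
  have h : HasSum (fun n : ℕ => ((n+2 : ℕ) : ℝ) * (((n+2 : ℕ) : ℝ) - 1) * (x ^ (n+2) / (n+2)!))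
      (x ^ 2 * Real.exp x) := by
    have := (aux_exp x).mul_left (x ^ 2)
    convert this using 2 with n
    on_goal 1 => rfl
    have hfac : ((n+2)! : ℝ) = (n+2) * ((n+1) * n !) := by
      rw [Nat.factorial_succ, Nat.factorial_succ]; push_cast; ring
    rw [hfac]
    push_cast
    have hf : (n ! : ℝ) ≠ 0 := Nat.cast_ne_zero.mpr n.factorial_ne_zero
    have h1 : (n : ℝ) + 1 ≠ 0 := by positivity
    have h2 : (n : ℝ) + 2 ≠ 0 := by positivity
    field_simp
    ring
  have h2 := (hasSum_nat_add_iff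
      (f := fun n : ℕ => (n : ℝ) * ((n : ℝ) - 1) * (x ^ n / n !)) 2).mp h
  simpa [Finset.sum_range_succ] using h2

lemma aux_main (x A C : ℝ) :
    HasSum (fun n : ℕ =>
        (Real.exp (-x) * x ^ n / n !) * ((n : ℝ) * ((n : ℝ) - 1) * A + (n : ℝ) * C))
      (A * x ^ 2 + C * x) := by
  have h := (((aux_m2 x).mul_left A).add ((aux_m1 x).mul_left C)).mul_left (Real.exp (-x))
  have hval : Real.exp (-x) * (A * (x ^ 2 * Real.exp x) + C * (x * Real.exp x))
      = A * x ^ 2 + C * x := by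
    have he : Real.exp (-x) * Real.exp x = 1 := by rw [← Real.exp_add]; simp
    linear_combination (A * x ^ 2 + C * x) * he
  rw [hval] at h
  convert h using 2 with n
  on_goal 1 => rfl
  ring

lemma aux_cast (n : ℕ) : ((n * (n - 1) : ℕ) : ℝ) = (n : ℝ) * ((n : ℝ) - 1) := by
  rcases n with _ | m
  · simp
  · push_cast [Nat.succ_sub_one]
    ring

lemma aux_count (n : ℕ) (A C : ℝ≥0∞) :
    ∑ i ∈ Finset.range n, ∑ j ∈ Finset.range n, (if i = j then C else A)
      = ↑n * C + ↑(n * (n - 1)) * A := by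
  have hinner : ∀ i ∈ Finset.range n,
      ∑ j ∈ Finset.range n, (if i = j then C else A) = C + ↑(n - 1) * A := by
    intro i hi
    rw [← Finset.add_sum_erase _ _ hi, if_pos rfl]
    congr 1
    rw [Finset.sum_congr rfl fun j hj => if_neg fun h => (Finset.mem_erase.mp hj).1 h.symm,
      Finset.sum_const, Finset.card_erase_of_mem hi, Finset.card_range, nsmul_eq_mul]
  rw [Finset.sum_congr rfl hinner, Finset.sum_const, Finset.card_range, nsmul_eq_mul,
    mul_add, Nat.cast_mul, mul_assoc]

lemma aux_final (μ : ℝ≥0) (a b : ℝ) (hb : 0 ≤ b) (hba : b ≤ a) (ha : a ≤ 1) :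
    (∑' n : ℕ, ENNReal.ofReal (ProbabilityTheory.poissonPMFReal μ n) *
        (↑(n * (n - 1)) * (ENNReal.ofReal a * ENNReal.ofReal (1 - b))
          + ↑n * ENNReal.ofReal (a - b))).toReal
      = a * (1 - b) * (μ : ℝ) ^ 2 + (a - b) * (μ : ℝ) := by
  have ha0 : 0 ≤ a := hb.trans hba
  have hb1 : b ≤ 1 := hba.trans ha
  have hA : 0 ≤ a * (1 - b) := mul_nonneg ha0 (by linarith)
  have hC : 0 ≤ a - b := by linarith
  have hs := aux_main (μ : ℝ) (a * (1 - b)) (a - b)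
  have hterm : ∀ n : ℕ, ENNReal.ofReal (ProbabilityTheory.poissonPMFReal μ n) *
      (↑(n * (n - 1)) * (ENNReal.ofReal a * ENNReal.ofReal (1 - b))
        + ↑n * ENNReal.ofReal (a - b))
      = ENNReal.ofReal ((Real.exp (-(μ : ℝ)) * (μ : ℝ) ^ n / n !) *
          ((n : ℝ) * ((n : ℝ) - 1) * (a * (1 - b)) + (n : ℝ) * (a - b))) := by
    intro n
    rw [← ENNReal.ofReal_mul ha0, ← ENNReal.ofReal_natCast (n * (n - 1)),
      ← ENNReal.ofReal_natCast n,
      ← ENNReal.ofReal_mul (by positivity), ← ENNReal.ofReal_mul (by positivity),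
      ← ENNReal.ofReal_add (mul_nonneg (by positivity) hA) (mul_nonneg (by positivity) hC),
      ← ENNReal.ofReal_mul ProbabilityTheory.poissonPMFReal_nonneg]
    congr 1
    rw [ProbabilityTheory.poissonPMFReal, aux_cast]
  rw [tsum_congr hterm,
    ← ENNReal.ofReal_tsum_of_nonneg (fun n => by
      refine mul_nonneg (by positivity) (add_nonneg ?_ (mul_nonneg n.cast_nonneg hC))
      rw [← aux_cast]
      exact mul_nonneg (Nat.cast_nonneg _) hA) hs.summable,
    hs.tsum_eq, ENNReal.toReal_ofReal]
  nlinarith [sq_nonneg (μ : ℝ), μ.coe_nonneg]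

/-- For `N` Poisson with mean `μ > 0` and `(U_i)` i.i.d. uniform on `[0,1]`
independent of `N`, with `0 ≤ b ≤ a ≤ 1`, the thinned counts
`N₁ = ∑_{i<N} 1{U_i ≤ a}` and `N₂ = ∑_{i<N} 1{U_i > b}` satisfy
`E[N₁·N₂] = a(1−b)·μ² + (a−b)·μ`. -/
theorem stmt8 {Ω : Type*} [MeasurableSpace Ω] (P : Measure Ω) [IsProbabilityMeasure P]
    (μ : ℝ≥0) (hμ : 0 < μ)
    (N : Ω → ℕ) (hN : Measurable N)
    (hNlaw : Measure.map N P = ProbabilityTheory.poissonMeasure μ)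
    (U : ℕ → Ω → ℝ) (hU : ∀ i, Measurable (U i))
    (hUlaw : ∀ i, Measure.map (U i) P = volume.restrict (Set.Icc (0 : ℝ) 1))
    (hUindep : iIndepFun U P)
    (hNU : IndepFun N (fun ω i => U i ω) P)
    (a b : ℝ) (hb : 0 ≤ b) (hba : b ≤ a) (ha : a ≤ 1) :
    ∫ ω, (∑ i ∈ Finset.range (N ω), if U i ω ≤ a then (1 : ℝ) else 0)
        * (∑ j ∈ Finset.range (N ω), if b < U j ω then (1 : ℝ) else 0) ∂P
      = a * (1 - b) * (μ : ℝ) ^ 2 + (a - b) * (μ : ℝ) := by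
  classical
  have ha0 : 0 ≤ a := hb.trans hba
  have hb1 : b ≤ 1 := hba.trans ha
  set X : ℕ → Ω → ℝ≥0∞ := fun i ω => if U i ω ≤ a then 1 else 0 with hXdef
  set Y : ℕ → Ω → ℝ≥0∞ := fun j ω => if b < U j ω then 1 else 0 with hYdef
  have hXm : ∀ i, Measurable (X i) := fun i =>
    Measurable.ite (measurableSet_le (hU i) measurable_const) measurable_const measurable_const
  have hYm : ∀ j, Measurable (Y j) := fun j =>
    Measurable.ite (measurableSet_lt measurable_const (hU j)) measurable_const measurable_const
  -- single lintegrals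
  have hXint : ∀ i, ∫⁻ ω, X i ω ∂P = ENNReal.ofReal a := by
    intro i
    have h1 : ∀ ω, X i ω = (Set.Iic a).indicator (1 : ℝ → ℝ≥0∞) (U i ω) := by
      intro ω; simp [hXdef, Set.indicator_apply]
    simp_rw [h1]
    rw [← lintegral_map (measurable_one.indicator measurableSet_Iic) (hU i), hUlaw i,
      lintegral_indicator_one measurableSet_Iic, Measure.restrict_apply measurableSet_Iic]
    have hset : Set.Iic a ∩ Set.Icc (0 : ℝ) 1 = Set.Icc 0 a := by
      ext x
      simp only [Set.mem_inter_iff, Set.mem_Iic, Set.mem_Icc]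
      constructor
      · rintro ⟨h1, h2, h3⟩; exact ⟨h2, h1⟩
      · rintro ⟨h1, h2⟩; exact ⟨h2, h1, h2.trans ha⟩
    rw [hset, Real.volume_Icc, sub_zero]
  have hYint : ∀ j, ∫⁻ ω, Y j ω ∂P = ENNReal.ofReal (1 - b) := by
    intro j
    have h1 : ∀ ω, Y j ω = (Set.Ioi b).indicator (1 : ℝ → ℝ≥0∞) (U j ω) := by
      intro ω; simp [hYdef, Set.indicator_apply]
    simp_rw [h1]
    rw [← lintegral_map (measurable_one.indicator measurableSet_Ioi) (hU j), hUlaw j,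
      lintegral_indicator_one measurableSet_Ioi, Measure.restrict_apply measurableSet_Ioi]
    have hset : Set.Ioi b ∩ Set.Icc (0 : ℝ) 1 = Set.Ioc b 1 := by
      ext x
      simp only [Set.mem_inter_iff, Set.mem_Ioi, Set.mem_Icc, Set.mem_Ioc]
      constructor
      · rintro ⟨h1, h2, h3⟩; exact ⟨h1, h3⟩
      · rintro ⟨h1, h2⟩; exact ⟨h1, (hb.trans h1.le), h2⟩
    rw [hset, Real.volume_Ioc]
  have hXYint : ∀ i j, ∫⁻ ω, X i ω * Y j ω ∂P
      = if i = j then ENNReal.ofReal (a - b)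
        else ENNReal.ofReal a * ENNReal.ofReal (1 - b) := by
    intro i j
    by_cases hij : i = j
    · subst hij
      rw [if_pos rfl]
      have h1 : ∀ ω, X i ω * Y i ω = (Set.Ioc b a).indicator (1 : ℝ → ℝ≥0∞) (U i ω) := by
        intro ω
        by_cases h1 : U i ω ≤ a <;> by_cases h2 : b < U i ω <;>
          simp [hXdef, hYdef, Set.indicator_apply, Set.mem_Ioc, h1, h2]
      simp_rw [h1]
      rw [← lintegral_map (measurable_one.indicator measurableSet_Ioc) (hU i), hUlaw i,
        lintegral_indicator_one measurableSet_Ioc, Measure.restrict_apply measurableSet_Ioc]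
      have hset : Set.Ioc b a ∩ Set.Icc (0 : ℝ) 1 = Set.Ioc b a := by
        apply Set.inter_eq_left.mpr
        intro x hx
        exact ⟨(hb.trans hx.1.le), hx.2.trans ha⟩
      rw [hset, Real.volume_Ioc]
    · rw [if_neg hij]
      have hf : Measurable (fun x : ℝ => if x ≤ a then (1 : ℝ≥0∞) else 0) :=
        Measurable.ite (measurableSet_le measurable_id measurable_const)
          measurable_const measurable_const
      have hg : Measurable (fun x : ℝ => if b < x then (1 : ℝ≥0∞) else 0) :=
        Measurable.ite (measurableSet_lt measurable_const measurable_id)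
          measurable_const measurable_const
      have hind : IndepFun (X i) (Y j) P := (hUindep.indepFun hij).comp hf hg
      rw [lintegral_mul_eq_lintegral_mul_lintegral_of_indepFun''
        (hXm i).aemeasurable (hYm j).aemeasurable hind, hXint i, hYint j]
  -- counts for fixed n
  set F : ℕ → Ω → ℝ≥0∞ :=
    fun n ω => (∑ i ∈ Finset.range n, X i ω) * ∑ j ∈ Finset.range n, Y j ω with hFdef
  have hFm : ∀ n, Measurable (F n) := fun n =>
    (Finset.measurable_sum _ fun i _ => hXm i).mul (Finset.measurable_sum _ fun j _ => hYm j)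
  have hFint : ∀ n, ∫⁻ ω, F n ω ∂P
      = ↑n * ENNReal.ofReal (a - b)
        + ↑(n * (n - 1)) * (ENNReal.ofReal a * ENNReal.ofReal (1 - b)) := by
    intro n
    have h1 : ∀ ω, F n ω = ∑ i ∈ Finset.range n, ∑ j ∈ Finset.range n, X i ω * Y j ω := by
      intro ω; exact Finset.sum_mul_sum _ _ _ _
    simp_rw [h1]
    rw [lintegral_finset_sum (f := fun i ω => ∑ j ∈ Finset.range n, X i ω * Y j ω) _ fun i _ => Finset.measurable_sum _ fun j _ => (hXm i).mul (hYm j)]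
    rw [Finset.sum_congr rfl fun i _ =>
      lintegral_finset_sum (f := fun j ω => X i ω * Y j ω) _ fun j _ => (hXm i).mul (hYm j)]
    simp_rw [hXYint]
    exact aux_count n _ _
  -- indicator of N = n
  set I : ℕ → Ω → ℝ≥0∞ := fun n ω => if N ω = n then 1 else 0 with hIdef
  have hIm : ∀ n, Measurable (I n) := fun n =>
    Measurable.ite (hN (measurableSet_singleton n)) measurable_const measurable_const
  have hIint : ∀ n, ∫⁻ ω, I n ω ∂P
      = ENNReal.ofReal (ProbabilityTheory.poissonPMFReal μ n) := by
    intro n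
    have h1 : ∀ ω, I n ω = ({n} : Set ℕ).indicator (1 : ℕ → ℝ≥0∞) (N ω) := by
      intro ω; simp [hIdef, Set.indicator_apply]
    simp_rw [h1]
    rw [← lintegral_map (measurable_one.indicator (measurableSet_singleton n)) hN, hNlaw,
      lintegral_indicator_one (measurableSet_singleton n),
      ProbabilityTheory.poissonMeasure_singleton]
    rfl
  have hIndep : ∀ n, ∫⁻ ω, I n ω * F n ω ∂P = (∫⁻ ω, I n ω ∂P) * ∫⁻ ω, F n ω ∂P := by
    intro n
    refine lintegral_mul_eq_lintegral_mul_lintegral_of_indepFun''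
      (hIm n).aemeasurable (hFm n).aemeasurable ?_
    have hφ : Measurable (fun m : ℕ => if m = n then (1 : ℝ≥0∞) else 0) := measurable_from_top
    have hψ : Measurable (fun u : ℕ → ℝ =>
        (∑ i ∈ Finset.range n, if u i ≤ a then (1 : ℝ≥0∞) else 0) *
          ∑ j ∈ Finset.range n, if b < u j then (1 : ℝ≥0∞) else 0) := by
      refine Measurable.mul ?_ ?_
      · exact Finset.measurable_sum _ fun i _ =>
          Measurable.ite (measurableSet_le (measurable_pi_apply i) measurable_const)
            measurable_const measurable_const
      · exact Finset.measurable_sum _ fun j _ =>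
          Measurable.ite (measurableSet_lt measurable_const (measurable_pi_apply j))
            measurable_const measurable_const
    exact hNU.comp hφ hψ
  -- pointwise identity
  have hpt : ∀ ω, F (N ω) ω = ∑' n, I n ω * F n ω := by
    intro ω
    rw [tsum_eq_single (N ω) fun m hm => by
      simp only [hIdef]
      rw [if_neg fun h => hm h.symm, zero_mul]]
    simp [hIdef]
  set G : Ω → ℝ≥0∞ := fun ω => ∑' n, I n ω * F n ω with hGdef
  have hGm : Measurable G := Measurable.ennreal_tsum fun n => (hIm n).mul (hFm n)
  set f : Ω → ℝ := fun ω =>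
    (∑ i ∈ Finset.range (N ω), if U i ω ≤ a then (1 : ℝ) else 0) *
      ∑ j ∈ Finset.range (N ω), if b < U j ω then (1 : ℝ) else 0 with hfdef
  have hfnn : ∀ ω, 0 ≤ f ω := fun ω =>
    mul_nonneg (Finset.sum_nonneg fun i _ => by split_ifs <;> norm_num)
      (Finset.sum_nonneg fun j _ => by split_ifs <;> norm_num)
  have hofReal : ∀ ω, ENNReal.ofReal (f ω) = F (N ω) ω := by
    intro ω
    simp only [hfdef, hFdef, hXdef, hYdef]
    rw [ENNReal.ofReal_mul (Finset.sum_nonneg fun i _ => by split_ifs <;> norm_num)]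
    congr 1
    · rw [ENNReal.ofReal_sum_of_nonneg fun i _ => by split_ifs <;> norm_num]
      exact Finset.sum_congr rfl fun i _ => by split_ifs <;> simp
    · rw [ENNReal.ofReal_sum_of_nonneg fun j _ => by split_ifs <;> norm_num]
      exact Finset.sum_congr rfl fun j _ => by split_ifs <;> simp
  have hfG : f = fun ω => (G ω).toReal := by
    funext ω
    rw [← ENNReal.toReal_ofReal (hfnn ω), hofReal ω, hpt ω]
  have hfm : AEStronglyMeasurable f P := by
    rw [hfG]; exact hGm.ennreal_toReal.aestronglyMeasurable
  rw [integral_eq_lintegral_of_nonneg_ae (ae_of_all _ hfnn) hfm]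
  have hlint : ∫⁻ ω, ENNReal.ofReal (f ω) ∂P
      = ∑' n : ℕ, ENNReal.ofReal (ProbabilityTheory.poissonPMFReal μ n) *
          (↑(n * (n - 1)) * (ENNReal.ofReal a * ENNReal.ofReal (1 - b))
            + ↑n * ENNReal.ofReal (a - b)) := by
    have h1 : ∀ ω, ENNReal.ofReal (f ω) = G ω := fun ω => by rw [hofReal ω, hpt ω]
    simp_rw [h1, hGdef]
    rw [lintegral_tsum (f := fun n ω => I n ω * F n ω) fun n => ((hIm n).mul (hFm n)).aemeasurable]
    refine tsum_congr fun n => ?_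
    rw [hIndep n, hIint n, hFint n]
    ring
  rw [hlint]
  exact aux_final μ a b hb hba ha
end

section
/- Let N be a Poisson random variable with mean μ > 0 and let (U_i)_{i∈ℕ} be an i.i.d. sequence of random variables uniformly distributed on [0, 1], with N and (U_i) independent. Fix 0 ≤ b ≤ a ≤ 1 and define N_1 = ∑_{i=0}^{N−1} 1{U_i ≤ a} and N_2 = ∑_{i=0}^{N−1} 1{U_i > b}. Then Cov(N_1, N_2) = (a−b)·μ; in particular the ratio Cov(N_1, N_2)/E[N] equals a − b. -/
open MeasureTheory ProbabilityTheory Real Finset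
open scoped NNReal ENNReal

section Aux

lemma pois_succ (μ : ℝ≥0) (n : ℕ) :
    poissonPMFReal μ (n + 1) * (n + 1) = (μ : ℝ) * poissonPMFReal μ n := by
  unfold poissonPMFReal
  rw [Nat.factorial_succ]
  push_cast
  have h : ((n : ℝ) + 1) ≠ 0 := by positivity
  have h2 : (Nat.factorial n : ℝ) ≠ 0 := by positivity
  field_simp
  ring

lemma pois_moment1 (μ : ℝ≥0) :
    HasSum (fun n : ℕ => poissonPMFReal μ n * n) (μ : ℝ) := by
  have h0 : HasSum (fun n : ℕ => (μ : ℝ) * poissonPMFReal μ n) ((μ:ℝ) * 1) :=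
    (poissonPMFRealSum μ).mul_left _
  have h1 : HasSum (fun n : ℕ => poissonPMFReal μ (n + 1) * ((n:ℝ) + 1)) ((μ:ℝ) * 1) := by
    simpa [pois_succ] using h0
  have := (hasSum_nat_add_iff (f := fun n : ℕ => poissonPMFReal μ n * n) 1).mp (by
    convert h1 using 2 with n
    · rfl
    push_cast; ring)
  simpa using this

lemma pois_moment2 (μ : ℝ≥0) :
    HasSum (fun n : ℕ => poissonPMFReal μ n * ((n:ℝ) * ((n:ℝ) - 1))) ((μ : ℝ)^2) := by
  have h0 : HasSum (fun n : ℕ => (μ : ℝ)^2 * poissonPMFReal μ n) ((μ:ℝ)^2 * 1) :=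
    (poissonPMFRealSum μ).mul_left _
  have h1 : HasSum (fun n : ℕ =>
      poissonPMFReal μ (n + 2) * (((n:ℝ) + 2) * ((n:ℝ) + 1))) ((μ:ℝ)^2 * 1) := by
    have : ∀ n : ℕ, poissonPMFReal μ (n + 2) * (((n:ℝ) + 2) * ((n:ℝ) + 1))
        = (μ:ℝ)^2 * poissonPMFReal μ n := by
      intro n
      have e1 := pois_succ μ (n + 1)
      have e2 := pois_succ μ n
      push_cast at e1 e2 ⊢
      linear_combination ((n:ℝ)+1) * e1 + (μ:ℝ) * e2
    simpa [this] using h0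
  have := (hasSum_nat_add_iff
      (f := fun n : ℕ => poissonPMFReal μ n * ((n:ℝ) * ((n:ℝ) - 1))) 2).mp (by
    convert h1 using 2 with n
    · rfl
    push_cast; ring)
  simpa [Finset.sum_range_succ] using this

lemma pois_meas {Ω : Type*} [MeasurableSpace Ω] (P : Measure Ω)
    (μ : ℝ≥0) (N : Ω → ℕ) (hN : Measurable N)
    (hNlaw : Measure.map N P = ProbabilityTheory.poissonMeasure μ) (n : ℕ) :
    P {ω | N ω = n} = ENNReal.ofReal (poissonPMFReal μ n) := by
  have : P (N ⁻¹' {n}) = Measure.map N P {n} := by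
    rw [Measure.map_apply hN (measurableSet_singleton n)]
  have h2 : Measure.map N P {n} = poissonPMF μ n := by
    rw [hNlaw]
    rw [poissonMeasure_singleton, ← poissonPMFReal_ofReal_eq_poissonPMF]; rfl
  have hset : {ω | N ω = n} = N ⁻¹' {n} := rfl
  rw [hset, this, h2]
  rfl

lemma cond_sum {Ω : Type*} [MeasurableSpace Ω] (P : Measure Ω) [IsProbabilityMeasure P]
    (μ : ℝ≥0) (N : Ω → ℕ) (hN : Measurable N)
    (hNlaw : Measure.map N P = ProbabilityTheory.poissonMeasure μ)
    (V : Ω → ℕ → ℝ) (hV : Measurable V)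
    (hNV : IndepFun N V P)
    (G : ℕ → (ℕ → ℝ) → ℝ) (hG : ∀ n, Measurable (G n))
    (C : ℕ → ℝ) (hGb : ∀ n y, |G n y| ≤ C n)
    (hsum : Summable (fun n => poissonPMFReal μ n * C n)) :
    ∫ ω, G (N ω) (V ω) ∂P = ∑' n, poissonPMFReal μ n * ∫ ω, G n (V ω) ∂P := by
  have hC0 : ∀ n, 0 ≤ C n := fun n => le_trans (abs_nonneg _) (hGb n (fun _ => 0))
  have hp0 : ∀ n, 0 ≤ poissonPMFReal μ n := fun n => poissonPMFReal_nonneg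
  set t : ℕ → Ω → ℝ := fun n => Set.indicator {ω | N ω = n} (fun ω => G n (V ω)) with ht
  have hNn : ∀ n : ℕ, MeasurableSet {ω | N ω = n} := fun n =>
    hN (measurableSet_singleton n)
  have htm : ∀ n, Measurable (t n) := fun n =>
    ((hG n).comp hV).indicator (hNn n)
  -- pointwise identity
  have hpt : ∀ ω, G (N ω) (V ω) = ∑' n, t n ω := by
    intro ω
    rw [tsum_eq_single (N ω)]
    · simp [ht, Set.indicator_apply]
    · intro m hm
      have hnm : ω ∉ {ω' | N ω' = m} := fun h => hm (Eq.symm h)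
      simp only [ht]
      exact Set.indicator_of_notMem hnm _
  -- lintegral bound
  have hlb : ∀ n, ∫⁻ ω, ‖t n ω‖₊ ∂P ≤ ENNReal.ofReal (poissonPMFReal μ n * C n) := by
    intro n
    have : ∀ ω, (‖t n ω‖₊ : ℝ≥0∞) ≤
        Set.indicator {ω | N ω = n} (fun _ => ENNReal.ofReal (C n)) ω := by
      intro ω
      by_cases h : ω ∈ {ω | N ω = n}
      · simp only [ht, Set.indicator_of_mem h]
        rw [← ENNReal.ofReal_coe_nnreal, coe_nnnorm]
        exact ENNReal.ofReal_le_ofReal (by simpa using hGb n (V ω))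
      · simp [ht, Set.indicator_of_notMem h]
    calc ∫⁻ ω, ‖t n ω‖₊ ∂P ≤ ∫⁻ ω, Set.indicator {ω | N ω = n}
            (fun _ => ENNReal.ofReal (C n)) ω ∂P := lintegral_mono this
      _ = ENNReal.ofReal (C n) * P {ω | N ω = n} := by
          rw [lintegral_indicator (hNn n), setLIntegral_const]
      _ = ENNReal.ofReal (poissonPMFReal μ n * C n) := by
          rw [pois_meas P μ N hN hNlaw n, ← ENNReal.ofReal_mul (hC0 n), mul_comm]
  have hfin : ∑' n, ∫⁻ ω, ‖t n ω‖₊ ∂P ≠ ⊤ := by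
    refine ne_top_of_le_ne_top ?_ (ENNReal.tsum_le_tsum hlb)
    rw [← ENNReal.ofReal_tsum_of_nonneg (fun n => mul_nonneg (hp0 n) (hC0 n)) hsum]
    exact ENNReal.ofReal_ne_top
  -- interchange
  have hint : ∫ ω, G (N ω) (V ω) ∂P = ∑' n, ∫ ω, t n ω ∂P := by
    have h1 : ∫ ω, G (N ω) (V ω) ∂P = ∫ ω, ∑' n, t n ω ∂P := by
      congr 1; funext ω; exact hpt ω
    rw [h1]
    exact integral_tsum (fun n => (htm n).aestronglyMeasurable) hfin
  rw [hint]
  congr 1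
  funext n
  -- each term via independence
  set ind : ℕ → ℝ := fun m => if m = n then (1:ℝ) else 0 with hindd
  have hindm : Measurable ind := measurable_from_top
  have hprod : ∀ ω, t n ω = (ind ∘ N) ω * (G n ∘ V) ω := by
    intro ω
    by_cases h : N ω = n <;> simp [ht, hindd, Set.indicator_apply, Function.comp, h]
  have hind : IndepFun (ind ∘ N) (G n ∘ V) P := hNV.comp hindm (hG n)
  have hmul := hind.integral_mul_eq_mul_integral
    ((hindm.comp hN).aestronglyMeasurable (μ := P))
    (((hG n).comp hV).aestronglyMeasurable)
  simp only [Pi.mul_apply] at hmul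
  calc ∫ ω, t n ω ∂P
      = ∫ ω, (ind ∘ N) ω * (G n ∘ V) ω ∂P := by simp_rw [hprod]
    _ = (∫ ω, (ind ∘ N) ω ∂P) * ∫ ω, (G n ∘ V) ω ∂P := hmul
    _ = poissonPMFReal μ n * ∫ ω, G n (V ω) ∂P := by
        congr 1
        have heq : (ind ∘ N) = Set.indicator {ω | N ω = n} (fun _ => (1:ℝ)) := by
          funext ω; by_cases h : N ω = n <;> simp [hindd, Set.indicator_apply, Function.comp, h]
        rw [heq, integral_indicator_const _ (hNn n), measureReal_def, pois_meas P μ N hN hNlaw n]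
        simp [ENNReal.toReal_ofReal (poissonPMFReal_nonneg (r := μ) (n := n))]

lemma unif_indicator_int {Ω : Type*} [MeasurableSpace Ω] (P : Measure Ω) (W : Ω → ℝ)
    (hW : Measurable W) (hlaw : Measure.map W P = volume.restrict (Set.Icc (0:ℝ) 1))
    (s : Set ℝ) (hs : MeasurableSet s) :
    ∫ ω, s.indicator (fun _ => (1:ℝ)) (W ω) ∂P = (volume (s ∩ Set.Icc 0 1)).toReal := by
  rw [← integral_map hW.aemeasurable ((measurable_const.indicator hs).aestronglyMeasurable),
    hlaw, integral_indicator_const _ hs, measureReal_restrict_apply hs, measureReal_def]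
  simp

section perN
set_option linter.unusedSectionVars false

variable {Ω : Type*} [MeasurableSpace Ω] (P : Measure Ω) [IsProbabilityMeasure P]
    (U : ℕ → Ω → ℝ) (hU : ∀ i, Measurable (U i))
    (hUlaw : ∀ i, Measure.map (U i) P = volume.restrict (Set.Icc (0 : ℝ) 1))
    (hUindep : iIndepFun U P)
    (a b : ℝ) (hb : 0 ≤ b) (hba : b ≤ a) (ha : a ≤ 1)

include hU hUlaw hb hba ha in
lemma IX (i : ℕ) : ∫ ω, (if U i ω ≤ a then (1:ℝ) else 0) ∂P = a := by
  have heq : ∀ u : ℝ, (if u ≤ a then (1:ℝ) else 0) = (Set.Iic a).indicator (fun _ => (1:ℝ)) u := by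
    intro u; simp [Set.indicator_apply]
  simp_rw [heq]
  rw [unif_indicator_int P (U i) (hU i) (hUlaw i) _ measurableSet_Iic]
  have hset : Set.Iic a ∩ Set.Icc 0 1 = Set.Icc 0 a := by
    ext x
    simp only [Set.mem_inter_iff, Set.mem_Iic, Set.mem_Icc]
    constructor
    · rintro ⟨h1, h2, h3⟩; exact ⟨h2, h1⟩
    · rintro ⟨h1, h2⟩; exact ⟨h2, h1, le_trans h2 ha⟩
  rw [hset, Real.volume_Icc, ENNReal.toReal_ofReal (by linarith)]
  ring

include hU hUlaw hb hba ha in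
lemma IY (j : ℕ) : ∫ ω, (if b < U j ω then (1:ℝ) else 0) ∂P = 1 - b := by
  have heq : ∀ u : ℝ, (if b < u then (1:ℝ) else 0) = (Set.Ioi b).indicator (fun _ => (1:ℝ)) u := by
    intro u; simp [Set.indicator_apply]
  simp_rw [heq]
  rw [unif_indicator_int P (U j) (hU j) (hUlaw j) _ measurableSet_Ioi]
  have hset : Set.Ioi b ∩ Set.Icc 0 1 = Set.Ioc b 1 := by
    ext x
    simp only [Set.mem_inter_iff, Set.mem_Ioi, Set.mem_Icc, Set.mem_Ioc]
    constructor
    · rintro ⟨h1, h2, h3⟩; exact ⟨h1, h3⟩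
    · rintro ⟨h1, h2⟩; exact ⟨h1, le_of_lt (lt_of_le_of_lt hb h1), h2⟩
  rw [hset, Real.volume_Ioc, ENNReal.toReal_ofReal (by linarith)]

include hU hUlaw hb hba ha in
lemma IXYsame (i : ℕ) :
    ∫ ω, (if U i ω ≤ a then (1:ℝ) else 0) * (if b < U i ω then (1:ℝ) else 0) ∂P = a - b := by
  have heq : ∀ u : ℝ, (if u ≤ a then (1:ℝ) else 0) * (if b < u then (1:ℝ) else 0)
      = (Set.Ioc b a).indicator (fun _ => (1:ℝ)) u := by
    intro u
    by_cases h1 : u ≤ a <;> by_cases h2 : b < u <;>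
      simp [Set.indicator_apply, Set.mem_Ioc, h1, h2]
  simp_rw [heq]
  rw [unif_indicator_int P (U i) (hU i) (hUlaw i) _ measurableSet_Ioc]
  have hset : Set.Ioc b a ∩ Set.Icc 0 1 = Set.Ioc b a := by
    ext x
    simp only [Set.mem_inter_iff, Set.mem_Ioc, Set.mem_Icc]
    constructor
    · rintro ⟨h1, _⟩; exact h1
    · rintro ⟨h1, h2⟩
      exact ⟨⟨h1, h2⟩, le_of_lt (lt_of_le_of_lt hb h1), le_trans h2 ha⟩
  rw [hset, Real.volume_Ioc, ENNReal.toReal_ofReal (by linarith)]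

include hU in
lemma measXcomp (i : ℕ) : Measurable (fun ω => if U i ω ≤ a then (1:ℝ) else 0) :=
  (Measurable.ite measurableSet_Iic measurable_const measurable_const).comp (hU i)

include hU in
lemma measYcomp (j : ℕ) : Measurable (fun ω => if b < U j ω then (1:ℝ) else 0) :=
  (Measurable.ite measurableSet_Ioi measurable_const measurable_const).comp (hU j)

include hU in
lemma intX (i : ℕ) : Integrable (fun ω => if U i ω ≤ a then (1:ℝ) else 0) P := by
  refine (integrable_const (1:ℝ)).mono' (measXcomp U hU a i).aestronglyMeasurable
    (ae_of_all _ fun ω => ?_)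
  by_cases h : U i ω ≤ a <;> simp [h]

include hU in
lemma intY (j : ℕ) : Integrable (fun ω => if b < U j ω then (1:ℝ) else 0) P := by
  refine (integrable_const (1:ℝ)).mono' (measYcomp U hU b j).aestronglyMeasurable
    (ae_of_all _ fun ω => ?_)
  by_cases h : b < U j ω <;> simp [h]

include hU in
lemma intXY (i j : ℕ) :
    Integrable (fun ω => (if U i ω ≤ a then (1:ℝ) else 0) * (if b < U j ω then (1:ℝ) else 0)) P := by
  refine (integrable_const (1:ℝ)).mono'
    (((measXcomp U hU a i).mul (measYcomp U hU b j)).aestronglyMeasurable)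
    (ae_of_all _ fun ω => ?_)
  by_cases h1 : U i ω ≤ a <;> by_cases h2 : b < U j ω <;> simp [h1, h2]

include hU hUindep in
lemma IXYdiff (i j : ℕ) (hij : i ≠ j)
    (hIX : ∫ ω, (if U i ω ≤ a then (1:ℝ) else 0) ∂P = a)
    (hIY : ∫ ω, (if b < U j ω then (1:ℝ) else 0) ∂P = 1 - b) :
    ∫ ω, (if U i ω ≤ a then (1:ℝ) else 0) * (if b < U j ω then (1:ℝ) else 0) ∂P
      = a * (1 - b) := by
  have hind : IndepFun ((fun u : ℝ => if u ≤ a then (1:ℝ) else 0) ∘ U i)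
      ((fun u : ℝ => if b < u then (1:ℝ) else 0) ∘ U j) P :=
    (hUindep.indepFun hij).comp
      (Measurable.ite measurableSet_Iic measurable_const measurable_const)
      (Measurable.ite measurableSet_Ioi measurable_const measurable_const)
  have hmul := hind.integral_mul_eq_mul_integral (measXcomp U hU a i).aestronglyMeasurable
    (measYcomp U hU b j).aestronglyMeasurable
  calc ∫ ω, (if U i ω ≤ a then (1:ℝ) else 0) * (if b < U j ω then (1:ℝ) else 0) ∂P
      = integral P (((fun u : ℝ => if u ≤ a then (1:ℝ) else 0) ∘ U i)
          * ((fun u : ℝ => if b < u then (1:ℝ) else 0) ∘ U j)) := rfl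
    _ = integral P ((fun u : ℝ => if u ≤ a then (1:ℝ) else 0) ∘ U i)
          * integral P ((fun u : ℝ => if b < u then (1:ℝ) else 0) ∘ U j) := hmul
    _ = a * (1 - b) := by
        rw [show integral P ((fun u : ℝ => if u ≤ a then (1:ℝ) else 0) ∘ U i) = a from hIX,
          show integral P ((fun u : ℝ => if b < u then (1:ℝ) else 0) ∘ U j) = 1 - b from hIY]

include hU hUlaw hb hba ha in
lemma E1 (n : ℕ) :
    ∫ ω, (∑ i ∈ Finset.range n, if U i ω ≤ a then (1:ℝ) else 0) ∂P = n * a := by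
  rw [integral_finset_sum _ (fun i _ => intX P U hU a i)]
  simp_rw [IX P U hU hUlaw a b hb hba ha]
  simp [mul_comm]

include hU hUlaw hb hba ha in
lemma E2 (n : ℕ) :
    ∫ ω, (∑ j ∈ Finset.range n, if b < U j ω then (1:ℝ) else 0) ∂P = n * (1 - b) := by
  rw [integral_finset_sum _ (fun j _ => intY P U hU b j)]
  simp_rw [IY P U hU hUlaw a b hb hba ha]
  simp [mul_comm]; ring

include hU hUlaw hUindep hb hba ha in
lemma E12 (n : ℕ) :
    ∫ ω, (∑ i ∈ Finset.range n, if U i ω ≤ a then (1:ℝ) else 0)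
        * (∑ j ∈ Finset.range n, if b < U j ω then (1:ℝ) else 0) ∂P
      = (n:ℝ) * n * (a * (1 - b)) + n * ((a - b) - a * (1 - b)) := by
  have expand : ∀ ω : Ω, (∑ i ∈ Finset.range n, if U i ω ≤ a then (1:ℝ) else 0)
      * (∑ j ∈ Finset.range n, if b < U j ω then (1:ℝ) else 0)
      = ∑ i ∈ Finset.range n, ∑ j ∈ Finset.range n,
          (if U i ω ≤ a then (1:ℝ) else 0) * (if b < U j ω then (1:ℝ) else 0) := by
    intro ω; rw [Finset.sum_mul_sum]
  simp_rw [expand]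
  rw [integral_finset_sum _ (fun i _ =>
    integrable_finset_sum _ (fun j _ => intXY P U hU a b i j))]
  have hswap : ∀ i : ℕ, (∫ ω, ∑ j ∈ Finset.range n,
      (if U i ω ≤ a then (1:ℝ) else 0) * (if b < U j ω then (1:ℝ) else 0) ∂P)
      = ∑ j ∈ Finset.range n,
          ∫ ω, (if U i ω ≤ a then (1:ℝ) else 0) * (if b < U j ω then (1:ℝ) else 0) ∂P :=
    fun i => integral_finset_sum _ (fun j _ => intXY P U hU a b i j)
  simp_rw [hswap]
  have hinner : ∀ i ∈ Finset.range n,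
      (∑ j ∈ Finset.range n,
        ∫ ω, (if U i ω ≤ a then (1:ℝ) else 0) * (if b < U j ω then (1:ℝ) else 0) ∂P)
      = n * (a * (1 - b)) + ((a - b) - a * (1 - b)) := by
    intro i hi
    have hval : ∀ j, (∫ ω, (if U i ω ≤ a then (1:ℝ) else 0)
        * (if b < U j ω then (1:ℝ) else 0) ∂P)
        = a * (1 - b) + (if j = i then (a - b) - a * (1 - b) else 0) := by
      intro j
      by_cases h : j = i
      · subst h; rw [IXYsame P U hU hUlaw a b hb hba ha j]; simp
      · rw [IXYdiff P U hU hUindep a b i j (fun hh => h hh.symm)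
          (IX P U hU hUlaw a b hb hba ha i) (IY P U hU hUlaw a b hb hba ha j)]
        simp [h]
    simp_rw [hval]
    rw [Finset.sum_add_distrib, Finset.sum_const, Finset.card_range,
      Finset.sum_ite_eq' (Finset.range n) i (fun _ => (a - b) - a * (1 - b))]
    simp [hi, nsmul_eq_mul]
  calc (∑ i ∈ Finset.range n, ∑ j ∈ Finset.range n,
        ∫ ω, (if U i ω ≤ a then (1:ℝ) else 0) * (if b < U j ω then (1:ℝ) else 0) ∂P)
      = ∑ i ∈ Finset.range n, ((n:ℝ) * (a * (1 - b)) + ((a - b) - a * (1 - b))) :=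
        Finset.sum_congr rfl hinner
    _ = (n:ℝ) * n * (a * (1 - b)) + n * ((a - b) - a * (1 - b)) := by
        rw [Finset.sum_const, Finset.card_range, nsmul_eq_mul]; ring

end perN

end Aux

/-- For `N` Poisson with mean `μ > 0` and `(U_i)` i.i.d. uniform on `[0,1]`
independent of `N`, with `0 ≤ b ≤ a ≤ 1`, the thinned counts
`N₁ = ∑_{i<N} 1{U_i ≤ a}` and `N₂ = ∑_{i<N} 1{U_i > b}` satisfy
`Cov(N₁, N₂) = (a−b)·μ`; in particular `Cov(N₁, N₂)/E[N] = a − b`. -/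
theorem stmt9 {Ω : Type*} [MeasurableSpace Ω] (P : Measure Ω) [IsProbabilityMeasure P]
    (μ : ℝ≥0) (hμ : 0 < μ)
    (N : Ω → ℕ) (hN : Measurable N)
    (hNlaw : Measure.map N P = ProbabilityTheory.poissonMeasure μ)
    (U : ℕ → Ω → ℝ) (hU : ∀ i, Measurable (U i))
    (hUlaw : ∀ i, Measure.map (U i) P = volume.restrict (Set.Icc (0 : ℝ) 1))
    (hUindep : iIndepFun U P)
    (hNU : IndepFun N (fun ω i => U i ω) P)
    (a b : ℝ) (hb : 0 ≤ b) (hba : b ≤ a) (ha : a ≤ 1) :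
    (∫ ω, (∑ i ∈ Finset.range (N ω), if U i ω ≤ a then (1 : ℝ) else 0)
          * (∑ j ∈ Finset.range (N ω), if b < U j ω then (1 : ℝ) else 0) ∂P)
        - (∫ ω, ∑ i ∈ Finset.range (N ω), if U i ω ≤ a then (1 : ℝ) else 0 ∂P)
          * (∫ ω, ∑ j ∈ Finset.range (N ω), if b < U j ω then (1 : ℝ) else 0 ∂P)
      = (a - b) * (μ : ℝ)
    ∧ ((∫ ω, (∑ i ∈ Finset.range (N ω), if U i ω ≤ a then (1 : ℝ) else 0)
          * (∑ j ∈ Finset.range (N ω), if b < U j ω then (1 : ℝ) else 0) ∂P)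
        - (∫ ω, ∑ i ∈ Finset.range (N ω), if U i ω ≤ a then (1 : ℝ) else 0 ∂P)
          * (∫ ω, ∑ j ∈ Finset.range (N ω), if b < U j ω then (1 : ℝ) else 0 ∂P))
        / (∫ ω, (N ω : ℝ) ∂P)
      = a - b := by
  have hVm : Measurable (fun ω (i : ℕ) => U i ω) :=
    measurable_pi_lambda _ hU
  set p : ℕ → ℝ := fun n => poissonPMFReal μ n with hpdef
  -- summability facts
  have hsum1 : Summable (fun n : ℕ => p n * (n : ℝ)) := (pois_moment1 μ).summable
  have hsumsq : Summable (fun n : ℕ => p n * ((n : ℝ) * n)) := by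
    have h := ((pois_moment2 μ).add (pois_moment1 μ)).summable
    have heq : (fun n : ℕ => p n * ((n:ℝ) * ((n:ℝ) - 1)) + p n * n)
        = fun n : ℕ => p n * ((n:ℝ) * n) := by
      funext n; ring
    rwa [heq] at h
  -- measurability of the G functions
  have hG1m : ∀ n : ℕ, Measurable (fun y : ℕ → ℝ =>
      ∑ i ∈ Finset.range n, if y i ≤ a then (1:ℝ) else 0) := fun n =>
    Finset.measurable_sum _ (fun i _ =>
      Measurable.ite (measurableSet_le (measurable_pi_apply i) measurable_const)
        measurable_const measurable_const)
  have hG2m : ∀ n : ℕ, Measurable (fun y : ℕ → ℝ =>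
      ∑ j ∈ Finset.range n, if b < y j then (1:ℝ) else 0) := fun n =>
    Finset.measurable_sum _ (fun j _ =>
      Measurable.ite (measurableSet_lt measurable_const (measurable_pi_apply j))
        measurable_const measurable_const)
  have hG12m : ∀ n : ℕ, Measurable (fun y : ℕ → ℝ =>
      (∑ i ∈ Finset.range n, if y i ≤ a then (1:ℝ) else 0)
      * (∑ j ∈ Finset.range n, if b < y j then (1:ℝ) else 0)) := fun n =>
    (hG1m n).mul (hG2m n)
  -- bounds
  have hS1b : ∀ (n : ℕ) (y : ℕ → ℝ),
      (0:ℝ) ≤ (∑ i ∈ Finset.range n, if y i ≤ a then (1:ℝ) else 0)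
      ∧ (∑ i ∈ Finset.range n, if y i ≤ a then (1:ℝ) else 0) ≤ n := by
    intro n y
    constructor
    · exact Finset.sum_nonneg fun i _ => by positivity
    · calc (∑ i ∈ Finset.range n, if y i ≤ a then (1:ℝ) else 0)
          ≤ ∑ _i ∈ Finset.range n, (1:ℝ) := Finset.sum_le_sum fun i _ => by
            by_cases h : y i ≤ a <;> simp [h]
        _ = n := by simp
  have hS2b : ∀ (n : ℕ) (y : ℕ → ℝ),
      (0:ℝ) ≤ (∑ j ∈ Finset.range n, if b < y j then (1:ℝ) else 0)
      ∧ (∑ j ∈ Finset.range n, if b < y j then (1:ℝ) else 0) ≤ n := by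
    intro n y
    constructor
    · exact Finset.sum_nonneg fun j _ => by positivity
    · calc (∑ j ∈ Finset.range n, if b < y j then (1:ℝ) else 0)
          ≤ ∑ _j ∈ Finset.range n, (1:ℝ) := Finset.sum_le_sum fun j _ => by
            by_cases h : b < y j <;> simp [h]
        _ = n := by simp
  have hG1b : ∀ (n : ℕ) (y : ℕ → ℝ),
      |(∑ i ∈ Finset.range n, if y i ≤ a then (1:ℝ) else 0)| ≤ (n:ℝ) := by
    intro n y
    rw [abs_of_nonneg (hS1b n y).1]
    exact (hS1b n y).2
  have hG2b : ∀ (n : ℕ) (y : ℕ → ℝ),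
      |(∑ j ∈ Finset.range n, if b < y j then (1:ℝ) else 0)| ≤ (n:ℝ) := by
    intro n y
    rw [abs_of_nonneg (hS2b n y).1]
    exact (hS2b n y).2
  have hG12b : ∀ (n : ℕ) (y : ℕ → ℝ),
      |(∑ i ∈ Finset.range n, if y i ≤ a then (1:ℝ) else 0)
        * (∑ j ∈ Finset.range n, if b < y j then (1:ℝ) else 0)| ≤ (n:ℝ) * n := by
    intro n y
    rw [abs_mul]
    exact mul_le_mul (hG1b n y) (hG2b n y) (abs_nonneg _) (Nat.cast_nonneg n)
  -- conditioning
  have h1 : (∫ ω, ∑ i ∈ Finset.range (N ω), if U i ω ≤ a then (1:ℝ) else 0 ∂P)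
      = ∑' n, p n * ∫ ω, (∑ i ∈ Finset.range n, if U i ω ≤ a then (1:ℝ) else 0) ∂P :=
    cond_sum P μ N hN hNlaw (fun ω i => U i ω) hVm hNU
      (fun n y => ∑ i ∈ Finset.range n, if y i ≤ a then (1:ℝ) else 0) hG1m
      (fun n => (n:ℝ)) hG1b hsum1
  have h2 : (∫ ω, ∑ j ∈ Finset.range (N ω), if b < U j ω then (1:ℝ) else 0 ∂P)
      = ∑' n, p n * ∫ ω, (∑ j ∈ Finset.range n, if b < U j ω then (1:ℝ) else 0) ∂P :=
    cond_sum P μ N hN hNlaw (fun ω i => U i ω) hVm hNU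
      (fun n y => ∑ j ∈ Finset.range n, if b < y j then (1:ℝ) else 0) hG2m
      (fun n => (n:ℝ)) hG2b hsum1
  have h12 : (∫ ω, (∑ i ∈ Finset.range (N ω), if U i ω ≤ a then (1:ℝ) else 0)
        * (∑ j ∈ Finset.range (N ω), if b < U j ω then (1:ℝ) else 0) ∂P)
      = ∑' n, p n * ∫ ω, (∑ i ∈ Finset.range n, if U i ω ≤ a then (1:ℝ) else 0)
          * (∑ j ∈ Finset.range n, if b < U j ω then (1:ℝ) else 0) ∂P :=
    cond_sum P μ N hN hNlaw (fun ω i => U i ω) hVm hNU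
      (fun n y => (∑ i ∈ Finset.range n, if y i ≤ a then (1:ℝ) else 0)
        * (∑ j ∈ Finset.range n, if b < y j then (1:ℝ) else 0)) hG12m
      (fun n => (n:ℝ) * n) hG12b hsumsq
  have hNint : (∫ ω, (N ω : ℝ) ∂P) = (μ : ℝ) := by
    have h := cond_sum P μ N hN hNlaw (fun ω i => U i ω) hVm hNU
      (fun n _ => (n:ℝ)) (fun n => measurable_const)
      (fun n => (n:ℝ)) (fun n y => by rw [abs_of_nonneg (Nat.cast_nonneg n)]) hsum1
    rw [h]
    have : ∀ n : ℕ, (∫ _ω : Ω, (n:ℝ) ∂P) = (n:ℝ) := fun n => by simp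
    calc ∑' n, p n * ∫ _ω : Ω, (n:ℝ) ∂P = ∑' n, p n * n := by
          exact tsum_congr fun n => by rw [this n]
      _ = (μ:ℝ) := (pois_moment1 μ).tsum_eq
  -- plug in per-n values
  rw [h1, h2, h12]
  have e1 : (∑' n, p n * ∫ ω, (∑ i ∈ Finset.range n, if U i ω ≤ a then (1:ℝ) else 0) ∂P)
      = (μ:ℝ) * a := by
    calc (∑' n, p n * ∫ ω, (∑ i ∈ Finset.range n, if U i ω ≤ a then (1:ℝ) else 0) ∂P)
        = ∑' n : ℕ, p n * ((n:ℝ) * a) :=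
          tsum_congr fun n => by rw [E1 P U hU hUlaw a b hb hba ha n]
      _ = (μ:ℝ) * a := by
          have h := (pois_moment1 μ).mul_right a
          have heq : (fun n : ℕ => p n * (n:ℝ) * a) = fun n : ℕ => p n * ((n:ℝ) * a) := by
            funext n; ring
          rw [heq] at h
          exact h.tsum_eq
  have e2 : (∑' n, p n * ∫ ω, (∑ j ∈ Finset.range n, if b < U j ω then (1:ℝ) else 0) ∂P)
      = (μ:ℝ) * (1 - b) := by
    calc (∑' n, p n * ∫ ω, (∑ j ∈ Finset.range n, if b < U j ω then (1:ℝ) else 0) ∂P)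
        = ∑' n : ℕ, p n * ((n:ℝ) * (1 - b)) :=
          tsum_congr fun n => by rw [E2 P U hU hUlaw a b hb hba ha n]
      _ = (μ:ℝ) * (1 - b) := by
          have h := (pois_moment1 μ).mul_right (1 - b)
          have heq : (fun n : ℕ => p n * (n:ℝ) * (1 - b))
              = fun n : ℕ => p n * ((n:ℝ) * (1 - b)) := by
            funext n; ring
          rw [heq] at h
          exact h.tsum_eq
  have e12 : (∑' n, p n * ∫ ω, (∑ i ∈ Finset.range n, if U i ω ≤ a then (1:ℝ) else 0)
        * (∑ j ∈ Finset.range n, if b < U j ω then (1:ℝ) else 0) ∂P)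
      = ((μ:ℝ)^2 + μ) * (a * (1 - b)) + (μ:ℝ) * ((a - b) - a * (1 - b)) := by
    calc (∑' n, p n * ∫ ω, (∑ i ∈ Finset.range n, if U i ω ≤ a then (1:ℝ) else 0)
          * (∑ j ∈ Finset.range n, if b < U j ω then (1:ℝ) else 0) ∂P)
        = ∑' n : ℕ, p n * ((n:ℝ) * n * (a * (1 - b)) + n * ((a - b) - a * (1 - b))) :=
          tsum_congr fun n => by rw [E12 P U hU hUlaw hUindep a b hb hba ha n]
      _ = ((μ:ℝ)^2 + μ) * (a * (1 - b)) + (μ:ℝ) * ((a - b) - a * (1 - b)) := by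
          have h := (((pois_moment2 μ).add (pois_moment1 μ)).mul_right (a * (1 - b))).add
            ((pois_moment1 μ).mul_right ((a - b) - a * (1 - b)))
          have heq : (fun n : ℕ => (p n * ((n:ℝ) * ((n:ℝ) - 1)) + p n * n) * (a * (1 - b))
              + p n * (n:ℝ) * ((a - b) - a * (1 - b)))
              = fun n : ℕ => p n * ((n:ℝ) * n * (a * (1 - b))
                  + n * ((a - b) - a * (1 - b))) := by
            funext n; ring
          rw [heq] at h
          exact h.tsum_eq
  rw [e1, e2, e12, hNint]
  have hμ' : (μ:ℝ) ≠ 0 := by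
    exact_mod_cast (ne_of_gt hμ)
  constructor
  · ring
  · rw [show ((μ:ℝ)^2 + μ) * (a * (1 - b)) + (μ:ℝ) * ((a - b) - a * (1 - b))
        - (μ:ℝ) * a * ((μ:ℝ) * (1 - b)) = (a - b) * μ by ring]
    rw [mul_div_assoc, div_self hμ', mul_one]
end
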